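/- Fix d, H ∈ ℕ with d ≥ 1, let Σ̂ ∈ ℝ^{d×d} be symmetric positive definite, M̂ ∈ ℝ^{d×d}, R̂ ∈ ℝ^d, and ν_0 ∈ ℝ^d. Let w_0, w_1, …, w_{H+1} ∈ ℝ^d with w_{H+1} = 0. Define ŵ_{H+1} := 0 and ŵ_h := R̂ + M̂ŵ_{h+1} for h = H, …, 0; define ν̂_h := (M̂ᵀ)^h ν_0 and Ŵ_h := R̂ + M̂w_{h+1} for h = 0, …, H. Then |ν_0ᵀw_0 − ν_0ᵀŵ_0| ≤ Σ_{h=0}^{H} √(ν̂_hᵀ Σ̂^{-1} ν̂_h) · √( (Ŵ_h − w_h)ᵀ Σ̂ (Ŵ_h − w_h) ). -/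

import Mathlib

open Matrix Finset

open scoped MatrixOrder in
lemma cs_aux {d : ℕ} {S : Matrix (Fin d) (Fin d) ℝ} (hS : S.PosDef) (u v : Fin d → ℝ) :
    |u ⬝ᵥ v| ≤ Real.sqrt (u ⬝ᵥ S⁻¹ *ᵥ u) * Real.sqrt (v ⬝ᵥ S *ᵥ v) := by
  set B := CFC.sqrt S with hBdef
  have hB : B.PosSemidef := (CFC.sqrt_nonneg S).posSemidef
  have hBB : B * B = S := CFC.sqrt_mul_sqrt_self S hS.posSemidef.nonneg
  have hBsym : Bᵀ = B := by
    have := hB.1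
    simpa [Matrix.IsHermitian, Matrix.conjTranspose_eq_transpose_of_trivial] using this
  have hdet : IsUnit B.det := by
    have hSdet : S.det ≠ 0 := ne_of_gt hS.det_pos
    have : B.det * B.det = S.det := by rw [← det_mul, hBB]
    rcases mul_ne_zero_iff.mp (this ▸ hSdet) with ⟨h, _⟩
    exact isUnit_iff_ne_zero.mpr h
  have hBinvsym : (B⁻¹)ᵀ = B⁻¹ := by rw [transpose_nonsing_inv, hBsym]
  set a := B⁻¹ *ᵥ u with ha
  set b := B *ᵥ v with hb
  have h1 : u ⬝ᵥ v = a ⬝ᵥ b := by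
    have h : (B⁻¹ *ᵥ u) ᵥ* B = u := by
      rw [← mulVec_transpose, hBsym, mulVec_mulVec, mul_nonsing_inv _ hdet, one_mulVec]
    rw [ha, hb, dotProduct_mulVec, h]
  have h2 : u ⬝ᵥ S⁻¹ *ᵥ u = a ⬝ᵥ a := by
    have h : u ᵥ* B⁻¹ = a := by rw [← mulVec_transpose, hBinvsym]
    rw [← hBB, Matrix.mul_inv_rev, ← mulVec_mulVec, dotProduct_mulVec, h]
  have h3 : v ⬝ᵥ S *ᵥ v = b ⬝ᵥ b := by
    have h : v ᵥ* B = b := by rw [← mulVec_transpose, hBsym]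
    rw [← hBB, ← mulVec_mulVec, dotProduct_mulVec, h]
  rw [h1, h2, h3]
  have key : (a ⬝ᵥ b)^2 ≤ (a ⬝ᵥ a) * (b ⬝ᵥ b) := by
    simpa [dotProduct, sq] using Finset.sum_mul_sq_le_sq_mul_sq univ a b
  calc |a ⬝ᵥ b| = Real.sqrt ((a ⬝ᵥ b)^2) := (Real.sqrt_sq_eq_abs _).symm
    _ ≤ Real.sqrt ((a ⬝ᵥ a) * (b ⬝ᵥ b)) := Real.sqrt_le_sqrt key
    _ = _ := Real.sqrt_mul (Finset.sum_nonneg fun i _ => mul_self_nonneg _) _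

/-- **Cauchy–Schwarz decomposition underlying the computable confidence bound.**
With `ŵ_h` the FQI iterates, `ν̂_h = (M̂ᵀ)^h ν₀` and `Ŵ_h = R̂ + M̂ w_{h+1}`, the
off-policy evaluation error satisfies
`|ν₀ᵀw₀ − ν₀ᵀŵ₀| ≤ Σ_h √(ν̂_hᵀ Σ̂⁻¹ ν̂_h) √((Ŵ_h − w_h)ᵀ Σ̂ (Ŵ_h − w_h))`. -/
theorem confidence_bound_decomposition (d H : ℕ) (hd : 1 ≤ d)
    (Shat : Matrix (Fin d) (Fin d) ℝ) (hShat : Shat.PosDef)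
    (Mhat : Matrix (Fin d) (Fin d) ℝ) (Rhat : Fin d → ℝ) (ν0 : Fin d → ℝ)
    (w : ℕ → Fin d → ℝ) (hw_top : w (H + 1) = 0)
    (what : ℕ → Fin d → ℝ) (hwhat_top : what (H + 1) = 0)
    (hwhat : ∀ h ≤ H, what h = Rhat + Mhat *ᵥ what (h + 1))
    (νhat : ℕ → Fin d → ℝ) (hνhat : ∀ h, νhat h = (Mhatᵀ) ^ h *ᵥ ν0)
    (What : ℕ → Fin d → ℝ) (hWhat : ∀ h ≤ H, What h = Rhat + Mhat *ᵥ w (h + 1)) :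
    |ν0 ⬝ᵥ w 0 - ν0 ⬝ᵥ what 0|
      ≤ ∑ h ∈ Finset.range (H + 1),
          Real.sqrt (νhat h ⬝ᵥ Shat⁻¹ *ᵥ νhat h)
            * Real.sqrt ((What h - w h) ⬝ᵥ Shat *ᵥ (What h - w h)) := by
  -- step recursion for `νhat`
  have hν_succ : ∀ k, νhat (k + 1) = Mhatᵀ *ᵥ νhat k := by
    intro k
    rw [hνhat, hνhat, pow_succ', ← mulVec_mulVec]
  -- telescoping identity
  have htel : ∀ k, k ≤ H + 1 →
      ν0 ⬝ᵥ w 0 - ν0 ⬝ᵥ what 0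
        = (∑ h ∈ Finset.range k, νhat h ⬝ᵥ (w h - What h))
          + νhat k ⬝ᵥ (w k - what k) := by
    intro k hk
    induction k with
    | zero =>
        simp [hνhat 0, dotProduct_sub]
    | succ k ih =>
        have hkH : k ≤ H := Nat.lt_succ_iff.mp hk
        rw [ih (le_of_lt (Nat.lt_of_lt_of_le (Nat.lt_succ_self k) hk)),
          Finset.sum_range_succ]
        have hsplit : νhat k ⬝ᵥ (w k - what k)
            = νhat k ⬝ᵥ (w k - What k) + νhat (k + 1) ⬝ᵥ (w (k + 1) - what (k + 1)) := by
          have h1 : What k - what k = Mhat *ᵥ (w (k + 1) - what (k + 1)) := by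
            rw [hWhat k hkH, hwhat k hkH, mulVec_sub]
            abel
          have h2 : νhat k ⬝ᵥ (What k - what k)
              = νhat (k + 1) ⬝ᵥ (w (k + 1) - what (k + 1)) := by
            rw [h1, hν_succ k, dotProduct_mulVec, mulVec_transpose]
          have h3 : w k - what k = (w k - What k) + (What k - what k) := by abel
          rw [h3, dotProduct_add, h2]
        rw [hsplit]
        ring
  have heq := htel (H + 1) le_rfl
  rw [hw_top, hwhat_top] at heq
  simp only [sub_self, dotProduct_zero, add_zero] at heq
  rw [heq]
  calc |∑ h ∈ Finset.range (H + 1), νhat h ⬝ᵥ (w h - What h)|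
      ≤ ∑ h ∈ Finset.range (H + 1), |νhat h ⬝ᵥ (w h - What h)| :=
        Finset.abs_sum_le_sum_abs _ _
    _ ≤ ∑ h ∈ Finset.range (H + 1),
          Real.sqrt (νhat h ⬝ᵥ Shat⁻¹ *ᵥ νhat h)
            * Real.sqrt ((What h - w h) ⬝ᵥ Shat *ᵥ (What h - w h)) := by
        refine Finset.sum_le_sum fun h _ => ?_
        have := cs_aux hShat (νhat h) (What h - w h)
        have habs : |νhat h ⬝ᵥ (w h - What h)| = |νhat h ⬝ᵥ (What h - w h)| := by
          rw [← abs_neg, ← dotProduct_neg, neg_sub]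
        rw [habs]
        exact this
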